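/- Let K₁, …, K_m ⊆ ℝⁿ be closed sets having linearly regular intersection at x̄ ∈ K = ∩ K_l (i.e., if Σ v_l = 0 with v_l ∈ N_{K_l}(x̄) then all v_l = 0). Then there exist δ > 0 and M′ > 0 such that whenever x ∈ B(x̄, δ) ∩ K, v_l ∈ N_{K_l}(x) for each l, and v = Σ v_l, one has max_l ‖v_l‖ ≤ M′ ‖v‖. -/

import Mathlib

open scoped RealInnerProductSpace
open Metric Filter

/-- The regular (Fréchet) normal cone of `C` at `x`. -/
def regNormalCone {n : ℕ} (C : Set (EuclideanSpace ℝ (Fin n)))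
    (x : EuclideanSpace ℝ (Fin n)) : Set (EuclideanSpace ℝ (Fin n)) :=
  {v | ∀ ε > 0, ∃ δ > 0, ∀ y ∈ C, ‖y - x‖ < δ → ⟪v, y - x⟫ ≤ ε * ‖y - x‖}

/-- The limiting normal cone of `C` at `x`: limits of regular normals at points of `C`
converging to `x`. -/
def limNormalCone {n : ℕ} (C : Set (EuclideanSpace ℝ (Fin n)))
    (x : EuclideanSpace ℝ (Fin n)) : Set (EuclideanSpace ℝ (Fin n)) :=
  {v | ∃ xs vs : ℕ → EuclideanSpace ℝ (Fin n), (∀ i, xs i ∈ C) ∧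
    Tendsto xs atTop (nhds x) ∧ (∀ i, vs i ∈ regNormalCone C (xs i)) ∧
    Tendsto vs atTop (nhds v)}

lemma regNormalCone_smul {n : ℕ} {C : Set (EuclideanSpace ℝ (Fin n))}
    {x v : EuclideanSpace ℝ (Fin n)} (hv : v ∈ regNormalCone C x) {c : ℝ} (hc : 0 ≤ c) :
    c • v ∈ regNormalCone C x := by
  rcases eq_or_lt_of_le hc with h | h
  · intro ε hε
    refine ⟨1, one_pos, fun y hy hyx => ?_⟩
    rw [← h, zero_smul, inner_zero_left]
    positivity
  · intro ε hε
    obtain ⟨δ, hδ, H⟩ := hv (ε / c) (by positivity)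
    refine ⟨δ, hδ, fun y hy hyx => ?_⟩
    rw [real_inner_smul_left]
    calc c * ⟪v, y - x⟫ ≤ c * (ε / c * ‖y - x‖) :=
          mul_le_mul_of_nonneg_left (H y hy hyx) h.le
      _ = ε * ‖y - x‖ := by field_simp

lemma limNormalCone_smul {n : ℕ} {C : Set (EuclideanSpace ℝ (Fin n))}
    {x v : EuclideanSpace ℝ (Fin n)} (hv : v ∈ limNormalCone C x) {c : ℝ} (hc : 0 ≤ c) :
    c • v ∈ limNormalCone C x := by
  obtain ⟨xs, vs, h1, h2, h3, h4⟩ := hv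
  exact ⟨xs, fun i => c • vs i, h1, h2, fun i => regNormalCone_smul (h3 i) hc,
    h4.const_smul c⟩

lemma limNormalCone_osc {n : ℕ} {C : Set (EuclideanSpace ℝ (Fin n))}
    {x v : EuclideanSpace ℝ (Fin n)} {xs vs : ℕ → EuclideanSpace ℝ (Fin n)}
    (hxs : Tendsto xs atTop (nhds x)) (hvs : ∀ k, vs k ∈ limNormalCone C (xs k))
    (hv : Tendsto vs atTop (nhds v)) : v ∈ limNormalCone C x := by
  have key : ∀ k : ℕ, ∃ y w : EuclideanSpace ℝ (Fin n), y ∈ C ∧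
      ‖y - xs k‖ < 1 / (k + 1) ∧ w ∈ regNormalCone C y ∧ ‖w - vs k‖ < 1 / (k + 1) := by
    intro k
    obtain ⟨ys, ws, hysC, hysT, hwsR, hwsT⟩ := hvs k
    have hpos : (0 : ℝ) < 1 / (k + 1) := by positivity
    have h1 : ∀ᶠ i in atTop, dist (ys i) (xs k) < 1 / (k + 1) :=
      hysT (Metric.ball_mem_nhds _ hpos)
    have h2 : ∀ᶠ i in atTop, dist (ws i) (vs k) < 1 / (k + 1) :=
      hwsT (Metric.ball_mem_nhds _ hpos)
    obtain ⟨i, hi1, hi2⟩ := (h1.and h2).exists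
    exact ⟨ys i, ws i, hysC i, by rwa [← dist_eq_norm], hwsR i, by rwa [← dist_eq_norm]⟩
  choose y w hyC hyd hwR hwd using key
  have hto : Tendsto (fun k : ℕ => (1 : ℝ) / (k + 1)) atTop (nhds 0) :=
    tendsto_one_div_add_atTop_nhds_zero_nat
  have triangle : ∀ (a b : ℕ → EuclideanSpace ℝ (Fin n)) (z : EuclideanSpace ℝ (Fin n)),
      (∀ k, ‖a k - b k‖ < 1 / (k + 1)) → Tendsto b atTop (nhds z) →
      Tendsto a atTop (nhds z) := by
    intro a b z hd hb
    rw [tendsto_iff_norm_sub_tendsto_zero]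
    refine squeeze_zero (fun k => norm_nonneg _)
      (g := fun k => 1 / (k + 1) + ‖b k - z‖) (fun k => ?_) ?_
    · calc ‖a k - z‖ = dist (a k) z := (dist_eq_norm _ _).symm
        _ ≤ dist (a k) (b k) + dist (b k) z := dist_triangle _ _ _
        _ = ‖a k - b k‖ + ‖b k - z‖ := by rw [dist_eq_norm, dist_eq_norm]
        _ ≤ 1 / (k + 1) + ‖b k - z‖ := by gcongr; exact (hd k).le
    · simpa using hto.add (tendsto_iff_norm_sub_tendsto_zero.mp hb)
  exact ⟨y, w, hyC, triangle y xs x hyd hxs, hwR, triangle w vs v hwd hv⟩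

/-- Under linearly regular intersection at `x̄`, normals at nearby points of the
intersection are uniformly bounded by their sum: there exist `δ > 0` and `M′ > 0` such
that `x ∈ B(x̄,δ) ∩ K`, `v_l ∈ N_{K_l}(x)` imply `‖v_l‖ ≤ M′ ‖∑ v_l‖` for all `l`. -/
theorem normals_bounded_by_sum {n m : ℕ}
    (K : Fin m → Set (EuclideanSpace ℝ (Fin n))) (hK : ∀ l, IsClosed (K l))
    (xbar : EuclideanSpace ℝ (Fin n)) (hxbar : xbar ∈ ⋂ l, K l)
    (hlinreg : ∀ v : Fin m → EuclideanSpace ℝ (Fin n),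
      (∀ l, v l ∈ limNormalCone (K l) xbar) → (∑ l, v l) = 0 → ∀ l, v l = 0) :
    ∃ δ > 0, ∃ M' > 0, ∀ x ∈ closedBall xbar δ ∩ ⋂ l, K l,
      ∀ v : Fin m → EuclideanSpace ℝ (Fin n), (∀ l, v l ∈ limNormalCone (K l) x) →
        ∀ l, ‖v l‖ ≤ M' * ‖∑ l', v l'‖ := by
  by_contra hcon
  push_neg at hcon
  have H : ∀ k : ℕ, ∃ x ∈ closedBall xbar (1 / (k + 1)) ∩ ⋂ l, K l,
      ∃ v : Fin m → EuclideanSpace ℝ (Fin n), (∀ l, v l ∈ limNormalCone (K l) x) ∧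
        ∃ l, ((k : ℝ) + 1) * ‖∑ l', v l'‖ < ‖v l‖ := by
    intro k
    obtain ⟨x, hx, v, hv, l, hl⟩ := hcon (1 / (k + 1)) (by positivity) ((k : ℝ) + 1)
      (by positivity)
    exact ⟨x, hx, v, hv, l, hl⟩
  choose x hx v hvmem l hl using H
  -- norm of v k as element of the pi type (sup norm) is positive
  have hcpos : ∀ k, 0 < ‖v k‖ := by
    intro k
    have h0 : (0 : ℝ) ≤ ((k : ℝ) + 1) * ‖∑ l', v k l'‖ := by positivity
    have : 0 < ‖v k (l k)‖ := lt_of_le_of_lt h0 (hl k)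
    exact lt_of_lt_of_le this (norm_le_pi_norm (v k) (l k))
  set w : ℕ → Fin m → EuclideanSpace ℝ (Fin n) := fun k => (‖v k‖)⁻¹ • v k with hw
  have hwnorm : ∀ k, ‖w k‖ = 1 := by
    intro k
    rw [hw]
    simp only [norm_smul, norm_inv, norm_norm]
    exact inv_mul_cancel₀ (hcpos k).ne'
  -- the sum of the normalized vectors is small
  have hwsum : ∀ k : ℕ, ‖∑ l', w k l'‖ ≤ 1 / (k + 1) := by
    intro k
    have hs : (∑ l', w k l') = (‖v k‖)⁻¹ • ∑ l', v k l' := by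
      rw [hw]; simp [Finset.smul_sum]
    rw [hs, norm_smul, norm_inv, norm_norm]
    have h1 : ‖∑ l', v k l'‖ ≤ ‖v k‖ / ((k : ℝ) + 1) := by
      rw [le_div_iff₀ (by positivity)]
      calc ‖∑ l', v k l'‖ * ((k : ℝ) + 1) = ((k : ℝ) + 1) * ‖∑ l', v k l'‖ := by ring
        _ ≤ ‖v k (l k)‖ := (hl k).le
        _ ≤ ‖v k‖ := norm_le_pi_norm (v k) (l k)
    calc (‖v k‖)⁻¹ * ‖∑ l', v k l'‖ ≤ (‖v k‖)⁻¹ * (‖v k‖ / ((k : ℝ) + 1)) := by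
          gcongr
      _ = 1 / (k + 1) := by rw [← mul_div_assoc, inv_mul_cancel₀ (hcpos k).ne']
  -- extract a convergent subsequence
  have hwball : ∀ k, w k ∈ closedBall (0 : Fin m → EuclideanSpace ℝ (Fin n)) 1 :=
    fun k => mem_closedBall_zero_iff.mpr (hwnorm k).le
  obtain ⟨wlim, _, φ, hφ, hφT⟩ :=
    (isCompact_closedBall (0 : Fin m → EuclideanSpace ℝ (Fin n)) 1).tendsto_subseq hwball
  have hto : Tendsto (fun k : ℕ => (1 : ℝ) / (k + 1)) atTop (nhds 0) :=
    tendsto_one_div_add_atTop_nhds_zero_nat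
  -- x ∘ φ tends to xbar
  have hxT : Tendsto (fun k => x (φ k)) atTop (nhds xbar) := by
    rw [tendsto_iff_dist_tendsto_zero]
    refine squeeze_zero (fun k => dist_nonneg) (g := fun k : ℕ => 1 / ((k : ℝ) + 1)) (fun k => ?_) hto
    have h1 : dist (x (φ k)) xbar ≤ 1 / (φ k + 1) := mem_closedBall.mp (hx (φ k)).1
    refine h1.trans ?_
    have hk : (k : ℝ) ≤ φ k := by exact_mod_cast hφ.le_apply
    exact one_div_le_one_div_of_le (by positivity) (by linarith)
  -- each component of wlim is a limiting normal at xbar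
  have hwlimmem : ∀ l', wlim l' ∈ limNormalCone (K l') xbar := by
    intro l'
    refine limNormalCone_osc hxT (vs := fun k => w (φ k) l') (fun k => ?_) ?_
    · exact limNormalCone_smul (hvmem (φ k) l') (inv_nonneg.mpr (norm_nonneg _))
    · exact (tendsto_pi_nhds.mp hφT) l'
  -- the sum of wlim is zero
  have hsum0 : (∑ l', wlim l') = 0 := by
    have hT : Tendsto (fun k => ∑ l', w (φ k) l') atTop (nhds (∑ l', wlim l')) :=
      tendsto_finset_sum _ (fun l' _ => (tendsto_pi_nhds.mp hφT) l')
    have hnT : Tendsto (fun k => ‖∑ l', w (φ k) l'‖) atTop (nhds ‖∑ l', wlim l'‖) :=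
      hT.norm
    have hn0 : Tendsto (fun k => ‖∑ l', w (φ k) l'‖) atTop (nhds 0) := by
      refine squeeze_zero (fun k => norm_nonneg _) (g := fun k : ℕ => 1 / ((k : ℝ) + 1))
        (fun k => ?_) hto
      refine (hwsum (φ k)).trans ?_
      have hk : (k : ℝ) ≤ φ k := by exact_mod_cast hφ.le_apply
      exact one_div_le_one_div_of_le (by positivity) (by linarith)
    have := tendsto_nhds_unique hnT hn0
    exact norm_eq_zero.mp this
  -- all components of wlim vanish, contradicting ‖wlim‖ = 1
  have hall0 : ∀ l', wlim l' = 0 := hlinreg wlim hwlimmem hsum0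
  have hwlim0 : wlim = 0 := funext hall0
  have hn1 : ‖wlim‖ = 1 := by
    have h1 : Tendsto (fun k => ‖w (φ k)‖) atTop (nhds ‖wlim‖) := hφT.norm
    have h2 : Tendsto (fun k => ‖w (φ k)‖) atTop (nhds 1) := by
      simp only [hwnorm]; exact tendsto_const_nhds
    exact tendsto_nhds_unique h1 h2
  rw [hwlim0, norm_zero] at hn1
  exact zero_ne_one hn1
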